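/- Let d ≥ 2 and, in MvPolynomial (Fin 4) ℂ with variables x_0, x_1, x_2, x_3, set F_d = (x_0^d − x_1^d)(x_2^d − x_3^d) and G_d = (x_0^d − x_2^d)(x_1^d − x_3^d). Then: (a) F_d − G_d = (x_0^d − x_3^d)(x_2^d − x_1^d); (b) F_d and G_d are coprime; (c) each of F_d, G_d and F_d − G_d is completely reducible (a product of 2d linear forms over ℂ); and (d) the pencil generated by F_d and G_d is essential, i.e. the linear factors of F_d together with those of G_d span the full 4-dimensional space of degree-1 forms. Hence for every d ≥ 2 there is an essential pencil on ℙ³ with at least three completely reducible fibers. -/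

import Mathlib

open MvPolynomial

noncomputable section

/-- A linear form: a nonzero homogeneous polynomial of degree 1. -/
def IsLinearForm (n : ℕ) (α : MvPolynomial (Fin (n + 1)) ℂ) : Prop :=
  α ≠ 0 ∧ α.IsHomogeneous 1

/-- A completely reducible polynomial: a product of linear forms. -/
def CompletelyReducible (n : ℕ) (P : MvPolynomial (Fin (n + 1)) ℂ) : Prop :=
  ∃ s : Multiset (MvPolynomial (Fin (n + 1)) ℂ),
    (∀ α ∈ s, IsLinearForm n α) ∧ P = s.prod

/-- F and G have no common non-unit factor. -/
def RelPrime (n : ℕ) (F G : MvPolynomial (Fin (n + 1)) ℂ) : Prop :=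
  ∀ p : MvPolynomial (Fin (n + 1)) ℂ, p ∣ F → p ∣ G → IsUnit p

/-- The generic fiber of the pencil generated by F and G is irreducible. -/
def GenericFiberIrreducible (n : ℕ) (F G : MvPolynomial (Fin (n + 1)) ℂ) : Prop :=
  {c : ℂ | ¬ Irreducible (F + C c * G)}.Finite

lemma prime_X4 (i : Fin 4) : Prime (X i : MvPolynomial (Fin (3+1)) ℂ) := by
  have h0 : Prime (X 0 : MvPolynomial (Fin (3+1)) ℂ) := by
    rw [← MulEquiv.prime_iff (finSuccEquiv ℂ 3).toRingEquiv.toMulEquiv]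
    simpa [finSuccEquiv_X_zero] using Polynomial.prime_X
  rw [← MulEquiv.prime_iff (renameEquiv ℂ (Equiv.swap (0:Fin 4) i)).toRingEquiv.toMulEquiv] at h0
  simpa [Equiv.swap_apply_left] using h0

lemma prime_lin (i j : Fin 4) (hij : i ≠ j) (c : ℂ) :
    Prime (X i - C c * X j : MvPolynomial (Fin (3+1)) ℂ) := by
  let φ : MvPolynomial (Fin 4) ℂ →ₐ[ℂ] MvPolynomial (Fin 4) ℂ :=
    aeval (fun k => if k = i then X i - C c * X j else X k)
  let ψ : MvPolynomial (Fin 4) ℂ →ₐ[ℂ] MvPolynomial (Fin 4) ℂ :=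
    aeval (fun k => if k = i then X i + C c * X j else X k)
  have h1 : φ.comp ψ = AlgHom.id ℂ _ := by
    apply MvPolynomial.algHom_ext
    intro k
    by_cases hk : k = i <;>
      simp [φ, ψ, hk, aeval_X, Ne.symm hij, algebraMap_eq]
  have h2 : ψ.comp φ = AlgHom.id ℂ _ := by
    apply MvPolynomial.algHom_ext
    intro k
    by_cases hk : k = i <;>
      simp [φ, ψ, hk, aeval_X, Ne.symm hij, algebraMap_eq]
  let e : MvPolynomial (Fin 4) ℂ ≃ₐ[ℂ] MvPolynomial (Fin 4) ℂ := AlgEquiv.ofAlgHom φ ψ h1 h2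
  have := (MulEquiv.prime_iff e.toRingEquiv.toMulEquiv).mpr (prime_X4 i)
  simpa [e, φ, aeval_X] using this

lemma hom_lin (i j : Fin 4) (c : ℂ) :
    (X i - C c * X j : MvPolynomial (Fin (3+1)) ℂ).IsHomogeneous 1 :=
  (isHomogeneous_X _ _).sub (by simpa using (isHomogeneous_C _ c).mul (isHomogeneous_X _ j))

lemma lin_form (i j : Fin 4) (hij : i ≠ j) (c : ℂ) :
    IsLinearForm 3 (X i - C c * X j : MvPolynomial (Fin (3+1)) ℂ) :=
  ⟨(prime_lin i j hij c).ne_zero, hom_lin i j c⟩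

lemma pow_sub_pow (d : ℕ) (hd : 0 < d) (i j : Fin 4) :
    (X i ^ d - X j ^ d : MvPolynomial (Fin (3+1)) ℂ) =
      ∏ ζ ∈ Polynomial.nthRootsFinset d (1 : ℂ), (X i - C ζ * X j) := by
  have hprim := Complex.isPrimitiveRoot_exp d hd.ne'
  apply MvPolynomial.funext; intro v
  rw [map_sub, map_pow, map_pow, eval_X, eval_X, map_prod]
  simp only [map_sub, eval_X, map_mul, eval_C]
  exact IsPrimitiveRoot.pow_sub_pow_eq_prod_sub_mul (x := v i) (y := v j) hd hprim

lemma not_assoc {i j k l : Fin 4} {a b : ℂ} (v : Fin 4 → ℂ)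
    (h1 : v i - a * v j = 0) (h2 : v k - b * v l ≠ 0) :
    ¬ Associated (X i - C a * X j : MvPolynomial (Fin (3+1)) ℂ) (X k - C b * X l) := by
  rintro ⟨u, hu⟩
  apply h2
  have := congrArg (eval v) hu
  simp only [map_mul, map_sub, eval_X, eval_C] at this
  rw [← this, h1, zero_mul]

/-- Multiset factorization package. -/
lemma factor_pack (d : ℕ) (hd : 0 < d) (i j k l : Fin 4)
    (hij : i ≠ j) (hkl : k ≠ l) :
    ∃ s : Multiset (MvPolynomial (Fin (3 + 1)) ℂ),
      Multiset.card s = 2 * d ∧ (∀ α ∈ s, IsLinearForm 3 α) ∧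
      (X i ^ d - X j ^ d) * (X k ^ d - X l ^ d) = s.prod := by
  classical
  set S := Polynomial.nthRootsFinset d (1 : ℂ)
  have hcard : S.card = d := (Complex.isPrimitiveRoot_exp d hd.ne').card_nthRootsFinset
  refine ⟨S.val.map (fun ζ => X i - C ζ * X j) + S.val.map (fun ζ => X k - C ζ * X l),
    ?_, ?_, ?_⟩
  · simp [hcard, two_mul]
  · intro α hα
    rcases Multiset.mem_add.mp hα with h | h <;>
    · obtain ⟨ζ, _, rfl⟩ := Multiset.mem_map.mp h
      first
        | exact lin_form i j hij ζ
        | exact lin_form k l hkl ζ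
  · rw [pow_sub_pow d hd i j, pow_sub_pow d hd k l, Multiset.prod_add]
    rfl

theorem essential_pencil_on_P3
    (d : ℕ) (hd : 2 ≤ d)
    (F G : MvPolynomial (Fin (3 + 1)) ℂ)
    (hFdef : F = (X 0 ^ d - X 1 ^ d) * (X 2 ^ d - X 3 ^ d))
    (hGdef : G = (X 0 ^ d - X 2 ^ d) * (X 1 ^ d - X 3 ^ d)) :
    (F - G = (X 0 ^ d - X 3 ^ d) * (X 2 ^ d - X 1 ^ d)) ∧
    RelPrime 3 F G ∧
    (∃ s : Multiset (MvPolynomial (Fin (3 + 1)) ℂ),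
      Multiset.card s = 2 * d ∧ (∀ α ∈ s, IsLinearForm 3 α) ∧ F = s.prod) ∧
    (∃ s : Multiset (MvPolynomial (Fin (3 + 1)) ℂ),
      Multiset.card s = 2 * d ∧ (∀ α ∈ s, IsLinearForm 3 α) ∧ G = s.prod) ∧
    (∃ s : Multiset (MvPolynomial (Fin (3 + 1)) ℂ),
      Multiset.card s = 2 * d ∧ (∀ α ∈ s, IsLinearForm 3 α) ∧ F - G = s.prod) ∧
    (∀ i : Fin (3 + 1),
      X i ∈ Submodule.span ℂ
        {α : MvPolynomial (Fin (3 + 1)) ℂ | IsLinearForm 3 α ∧ (α ∣ F ∨ α ∣ G)}) := by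
  have hd0 : 0 < d := by omega
  have hA : F - G = (X 0 ^ d - X 3 ^ d) * (X 2 ^ d - X 1 ^ d) := by
    rw [hFdef, hGdef]; ring
  set S := Polynomial.nthRootsFinset d (1 : ℂ) with hS
  have hmem : ∀ ζ ∈ S, ζ ^ d = 1 := fun ζ h => (Polynomial.mem_nthRootsFinset hd0 1).mp h
  have hne0 : ∀ ζ ∈ S, ζ ≠ 0 := by
    intro ζ h h0
    have := hmem ζ h
    rw [h0, zero_pow hd0.ne'] at this
    exact zero_ne_one this
  have hF : F = (∏ ζ ∈ S, (X 0 - C ζ * X 1)) * ∏ ζ ∈ S, (X 2 - C ζ * X 3) := by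
    rw [hFdef, pow_sub_pow d hd0, pow_sub_pow d hd0]
  have hG : G = (∏ ζ ∈ S, (X 0 - C ζ * X 2)) * ∏ ζ ∈ S, (X 1 - C ζ * X 3) := by
    rw [hGdef, pow_sub_pow d hd0, pow_sub_pow d hd0]
  have hF0 : F ≠ 0 := by
    rw [hF]
    apply mul_ne_zero <;>
      exact Finset.prod_ne_zero_iff.mpr fun ζ _ => (prime_lin _ _ (by decide) ζ).ne_zero
  refine ⟨hA, ?_, ?_, ?_, ?_, ?_⟩
  · -- RelPrime
    intro p hpF hpG
    by_contra hp
    have hp0 : p ≠ 0 := fun h => hF0 (zero_dvd_iff.mp (h ▸ hpF))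
    obtain ⟨q, hqirr, hqp⟩ := WfDvdMonoid.exists_irreducible_factor hp hp0
    have hq : Prime q := UniqueFactorizationMonoid.irreducible_iff_prime.mp hqirr
    have hqF : q ∣ F := hqp.trans hpF
    have hqG : q ∣ G := hqp.trans hpG
    rw [hF] at hqF
    rw [hG] at hqG
    have getF := (hq.2.2 _ _ hqF).imp hq.exists_mem_finset_dvd hq.exists_mem_finset_dvd
    have getG := (hq.2.2 _ _ hqG).imp hq.exists_mem_finset_dvd hq.exists_mem_finset_dvd
    have assoc : ∀ (i j : Fin 4) (a : ℂ), i ≠ j → q ∣ (X i - C a * X j) →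
        Associated q (X i - C a * X j) :=
      fun i j a hij h => hqirr.associated_of_dvd (prime_lin i j hij a).irreducible h
    rcases getF with ⟨ζ, hζ, hqζ⟩ | ⟨ζ, hζ, hqζ⟩ <;>
      rcases getG with ⟨η, hη, hqη⟩ | ⟨η, hη, hqη⟩
    · exact not_assoc (![ζ, 1, 0, 0])
        (by simp) (by simpa using hne0 ζ hζ)
        (((assoc _ _ _ (by decide) hqζ).symm.trans (assoc _ _ _ (by decide) hqη)))
    · exact not_assoc (![ζ, 1, 0, 0])
        (by simp) (by simp)
        (((assoc _ _ _ (by decide) hqζ).symm.trans (assoc _ _ _ (by decide) hqη)))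
    · exact not_assoc (![0, 0, ζ, 1])
        (by simp) (by simpa using mul_ne_zero (hne0 η hη) (hne0 ζ hζ))
        (((assoc _ _ _ (by decide) hqζ).symm.trans (assoc _ _ _ (by decide) hqη)))
    · exact not_assoc (![0, 0, ζ, 1])
        (by simp) (by simpa using hne0 η hη)
        (((assoc _ _ _ (by decide) hqζ).symm.trans (assoc _ _ _ (by decide) hqη)))
  · rw [hFdef]; exact factor_pack d hd0 0 1 2 3 (by decide) (by decide)
  · rw [hGdef]; exact factor_pack d hd0 0 2 1 3 (by decide) (by decide)
  · rw [hA]; exact factor_pack d hd0 0 3 2 1 (by decide) (by decide)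
  · -- essential
    set T : Set (MvPolynomial (Fin (3 + 1)) ℂ) :=
      {α | IsLinearForm 3 α ∧ (α ∣ F ∨ α ∣ G)} with hT
    set ω : ℂ := Complex.exp (2 * Real.pi * Complex.I / d) with hωdef
    have hprim : IsPrimitiveRoot ω d := Complex.isPrimitiveRoot_exp d hd0.ne'
    have hω1 : ω ≠ 1 := by
      intro h
      have h2 : d ∣ 1 := hprim.dvd_of_pow_eq_one 1 (by simp [h])
      have := Nat.le_of_dvd one_pos h2
      omega
    have h1S : (1 : ℂ) ∈ S := (Polynomial.mem_nthRootsFinset hd0 1).mpr (one_pow d)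
    have hωS : ω ∈ S := (Polynomial.mem_nthRootsFinset hd0 1).mpr hprim.pow_eq_one
    have hdvdF : ∀ ζ ∈ S, (X 0 - C ζ * X 1 : MvPolynomial (Fin (3+1)) ℂ) ∣ F :=
      fun ζ h => hF ▸ Dvd.dvd.mul_right (Finset.dvd_prod_of_mem _ h) _
    have hdvdG1 : ∀ ζ ∈ S, (X 0 - C ζ * X 2 : MvPolynomial (Fin (3+1)) ℂ) ∣ G :=
      fun ζ h => hG ▸ Dvd.dvd.mul_right (Finset.dvd_prod_of_mem _ h) _
    have hdvdG2 : ∀ ζ ∈ S, (X 1 - C ζ * X 3 : MvPolynomial (Fin (3+1)) ℂ) ∣ G :=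
      fun ζ h => hG ▸ Dvd.dvd.mul_left (Finset.dvd_prod_of_mem _ h) _
    have m1 : (X 0 - C 1 * X 1 : MvPolynomial (Fin (3+1)) ℂ) ∈ T :=
      ⟨lin_form 0 1 (by decide) 1, Or.inl (hdvdF 1 h1S)⟩
    have m2 : (X 0 - C ω * X 1 : MvPolynomial (Fin (3+1)) ℂ) ∈ T :=
      ⟨lin_form 0 1 (by decide) ω, Or.inl (hdvdF ω hωS)⟩
    have m3 : (X 0 - C 1 * X 2 : MvPolynomial (Fin (3+1)) ℂ) ∈ T :=
      ⟨lin_form 0 2 (by decide) 1, Or.inr (hdvdG1 1 h1S)⟩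
    have m4 : (X 1 - C 1 * X 3 : MvPolynomial (Fin (3+1)) ℂ) ∈ T :=
      ⟨lin_form 1 3 (by decide) 1, Or.inr (hdvdG2 1 h1S)⟩
    set V := Submodule.span ℂ T
    have s1 : (X 0 - C 1 * X 1 : MvPolynomial (Fin (3+1)) ℂ) ∈ V := Submodule.subset_span m1
    have s2 : (X 0 - C ω * X 1 : MvPolynomial (Fin (3+1)) ℂ) ∈ V := Submodule.subset_span m2
    have s3 : (X 0 - C 1 * X 2 : MvPolynomial (Fin (3+1)) ℂ) ∈ V := Submodule.subset_span m3
    have s4 : (X 1 - C 1 * X 3 : MvPolynomial (Fin (3+1)) ℂ) ∈ V := Submodule.subset_span m4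
    have key : C ((ω - 1)⁻¹) * (C ω - C 1) = (1 : MvPolynomial (Fin (3+1)) ℂ) := by
      rw [← C_sub, ← C_mul, inv_mul_cancel₀ (sub_ne_zero.mpr hω1), C_1]
    have hX1 : (X 1 : MvPolynomial (Fin (3+1)) ℂ) =
        (ω - 1)⁻¹ • ((X 0 - C 1 * X 1) - (X 0 - C ω * X 1)) := by
      rw [smul_eq_C_mul]
      linear_combination (-(X 1 : MvPolynomial (Fin (3+1)) ℂ)) * key
    have hX1V : (X 1 : MvPolynomial (Fin (3+1)) ℂ) ∈ V := by
      rw [hX1]; exact Submodule.smul_mem _ _ (Submodule.sub_mem _ s1 s2)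
    have hX0V : (X 0 : MvPolynomial (Fin (3+1)) ℂ) ∈ V := by
      have : (X 0 : MvPolynomial (Fin (3+1)) ℂ) = (X 0 - C 1 * X 1) + C 1 * X 1 := by ring
      rw [this]
      exact Submodule.add_mem _ s1 (by simpa [C_1] using Submodule.smul_mem V (1:ℂ) hX1V)
    have hX2V : (X 2 : MvPolynomial (Fin (3+1)) ℂ) ∈ V := by
      have : (X 2 : MvPolynomial (Fin (3+1)) ℂ) = X 0 - (X 0 - C 1 * X 2) := by
        rw [C_1]; ring
      rw [this]; exact Submodule.sub_mem _ hX0V s3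
    have hX3V : (X 3 : MvPolynomial (Fin (3+1)) ℂ) ∈ V := by
      have : (X 3 : MvPolynomial (Fin (3+1)) ℂ) = X 1 - (X 1 - C 1 * X 3) := by
        rw [C_1]; ring
      rw [this]; exact Submodule.sub_mem _ hX1V s4
    intro i
    fin_cases i <;> assumption
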